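/- Let x₁, …, x_n be independent real-valued random variables such that Pr[0 ≤ x₁ ≤ x₂ ≤ ⋯ ≤ x_n] ≥ 1 − ε, and for each i let α_i be a median of x_i (with α₀ = 0 and α_{n+1} = +∞). Then Pr[for every index i with 2i+1 ≤ n, x_{2i+1} ∈ [α_{2i}, α_{2i+2}]] ≥ 1 − 2ε. -/

import Mathlib

open MeasureTheory ProbabilityTheory
open scoped ENNReal

lemma aux_indep7 {Ω : Type*} [MeasurableSpace Ω] (μ : Measure Ω)
    (x : ℕ → Ω → ℝ) (hmeas : ∀ i, Measurable (x i))
    (hindep : iIndepFun x μ)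
    (i k : ℕ) (hk : ∀ j, k ≠ 2*j+1)
    (C : ℕ → Set ℝ) (hC : ∀ j, MeasurableSet (C j)) (D : Set ℝ) (hD : MeasurableSet D)
    (F : Set ℝ) (hF : MeasurableSet F) :
    μ ((((⋂ j : Fin i, (x (2*(j:ℕ)+1)) ⁻¹' C j) ∩ (x (2*i+1)) ⁻¹' D)) ∩ (x k) ⁻¹' F)
      = μ ((⋂ j : Fin i, (x (2*(j:ℕ)+1)) ⁻¹' C j) ∩ (x (2*i+1)) ⁻¹' D) * μ ((x k) ⁻¹' F) := by
  classical
  set T : Finset ℕ := Finset.image (fun j => 2*j+1) (Finset.range (i+1)) with hT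
  have hmemT : ∀ j, j ≤ i → (2*j+1) ∈ T := fun j hj =>
    Finset.mem_image.2 ⟨j, Finset.mem_range.2 (by omega), rfl⟩
  have hdisj : Disjoint T ({k} : Finset ℕ) := by
    simp only [Finset.disjoint_singleton_right, hT, Finset.mem_image, Finset.mem_range]
    rintro ⟨j, -, hj⟩
    exact hk j hj.symm
  have hIndep := hindep.indepFun_finset T {k} hdisj hmeas
  set t : Set (↥T → ℝ) :=
    (⋂ j : Fin i, (fun v : ↥T → ℝ =>
        v ⟨2*(j:ℕ)+1, hmemT j (Nat.le_of_lt j.2)⟩) ⁻¹' C j) ∩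
      ((fun v : ↥T → ℝ => v ⟨2*i+1, hmemT i le_rfl⟩) ⁻¹' D) with ht
  set s : Set (↥({k} : Finset ℕ) → ℝ) :=
    (fun v : ↥({k} : Finset ℕ) → ℝ => v ⟨k, Finset.mem_singleton_self k⟩) ⁻¹' F with hs
  have htm : MeasurableSet t :=
    (MeasurableSet.iInter fun (j : Fin i) =>
      (measurable_pi_apply (⟨2*(j:ℕ)+1, hmemT j (Nat.le_of_lt j.2)⟩ : ↥T)) (hC j)).inter
      ((measurable_pi_apply (⟨2*i+1, hmemT i le_rfl⟩ : ↥T)) hD)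
  have hsm : MeasurableSet s :=
    (measurable_pi_apply (⟨k, Finset.mem_singleton_self k⟩ : ↥({k} : Finset ℕ))) hF
  have h1 : (fun a (j : ↥T) => x j a) ⁻¹' t
      = (⋂ j : Fin i, (x (2*(j:ℕ)+1)) ⁻¹' C j) ∩ (x (2*i+1)) ⁻¹' D := by
    ext ω; simp [ht]
  have h2 : (fun a (j : ↥({k} : Finset ℕ)) => x j a) ⁻¹' s = (x k) ⁻¹' F := by
    ext ω; simp [hs]
  have := hIndep.measure_inter_preimage_eq_mul t s htm hsm
  rw [h1, h2] at this
  exact this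

theorem stmt_7 {Ω : Type*} [MeasurableSpace Ω] (μ : Measure Ω) [IsProbabilityMeasure μ]
    (n : ℕ) (x : ℕ → Ω → ℝ) (hmeas : ∀ i, Measurable (x i))
    (hindep : iIndepFun x μ)
    (ε : ℝ≥0∞) (hε : ε ≤ 1)
    (hmonot : μ {ω | 0 ≤ x 1 ω ∧ ∀ i, 1 ≤ i → i < n → x i ω ≤ x (i + 1) ω} ≥ 1 - ε)
    (α : ℕ → ℝ) (hα0 : α 0 = 0)
    (hmed : ∀ i, 1 ≤ i → i ≤ n →
      μ {ω | α i ≤ x i ω} ≥ 1 / 2 ∧ μ {ω | x i ω ≤ α i} ≥ 1 / 2) :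
    μ {ω | ∀ i : ℕ, 2 * i + 1 ≤ n →
        α (2 * i) ≤ x (2 * i + 1) ω ∧ (2 * i + 2 ≤ n → x (2 * i + 1) ω ≤ α (2 * i + 2))}
      ≥ 1 - 2 * ε := by
  classical
  set M := {ω | 0 ≤ x 1 ω ∧ ∀ i, 1 ≤ i → i < n → x i ω ≤ x (i + 1) ω} with hM
  -- the "good interval" sets
  set Qs : ℕ → Set ℝ := fun j =>
    Set.Ici (α (2*j)) ∩ (if 2*j+2 ≤ n then Set.Iic (α (2*j+2)) else Set.univ) with hQs
  have hQmeas : ∀ j, MeasurableSet (Qs j) := by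
    intro j
    by_cases h : 2*j+2 ≤ n <;> simp only [hQs, h, if_true, if_false] <;>
      exact measurableSet_Ici.inter (by measurability)
  have hQmem : ∀ j (t : ℝ), t ∈ Qs j ↔
      (α (2*j) ≤ t ∧ (2*j+2 ≤ n → t ≤ α (2*j+2))) := by
    intro j t
    by_cases h : 2*j+2 ≤ n <;> simp [hQs, h]
  set G := {ω | ∀ i : ℕ, 2*i+1 ≤ n → x (2*i+1) ω ∈ Qs i} with hG
  have hGoal : {ω | ∀ i : ℕ, 2 * i + 1 ≤ n →
      α (2 * i) ≤ x (2 * i + 1) ω ∧ (2 * i + 2 ≤ n → x (2 * i + 1) ω ≤ α (2 * i + 2))} = G := by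
    ext ω
    simp only [hG, Set.mem_setOf_eq]
    constructor
    · intro h i hi; exact (hQmem i _).2 (h i hi)
    · intro h i hi; exact (hQmem i _).1 (h i hi)
  rw [hGoal]
  have hGmeas : MeasurableSet G := by
    have : G = ⋂ i, ⋂ (_ : 2*i+1 ≤ n), (x (2*i+1)) ⁻¹' Qs i := by
      ext ω; simp [hG]
    rw [this]
    exact MeasurableSet.iInter fun i => MeasurableSet.iInter fun _ => (hmeas _) (hQmeas i)
  have hMmeas : MeasurableSet M := by
    have : M = ((x 1) ⁻¹' Set.Ici 0) ∩
        ⋂ i, ⋂ (_ : 1 ≤ i), ⋂ (_ : i < n), {ω | x i ω ≤ x (i+1) ω} := by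
      ext ω; simp [hM]
    rw [this]
    exact ((hmeas 1) measurableSet_Ici).inter
      (MeasurableSet.iInter fun i => MeasurableSet.iInter fun _ => MeasurableSet.iInter fun _ =>
        measurableSet_le (hmeas i) (hmeas (i+1)))
  -- decomposition sets
  set Dl : ℕ → Set ℝ := fun i => Set.Iio (α (2*i)) with hDl
  set Dr : ℕ → Set ℝ := fun i =>
    if 2*i+2 ≤ n then Set.Ici (α (2*i)) ∩ Set.Ioi (α (2*i+2)) else ∅ with hDr
  have hDlm : ∀ i, MeasurableSet (Dl i) := fun i => measurableSet_Iio
  have hDrm : ∀ i, MeasurableSet (Dr i) := by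
    intro i
    by_cases h : 2*i+2 ≤ n <;> simp only [hDr, h, if_true, if_false]
    · exact measurableSet_Ici.inter measurableSet_Ioi
    · exact MeasurableSet.empty
  set B : ℕ → Set Ω := fun i => ⋂ j : Fin i, (x (2*(j:ℕ)+1)) ⁻¹' Qs j with hB
  set El : ℕ → Set Ω := fun i => B i ∩ (x (2*i+1)) ⁻¹' Dl i with hEl
  set Er : ℕ → Set Ω := fun i => B i ∩ (x (2*i+1)) ⁻¹' Dr i with hEr
  set E : ℕ → Set Ω := fun i => if 2*i+1 ≤ n then El i ∪ Er i else ∅ with hE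
  have hBmeas : ∀ i, MeasurableSet (B i) :=
    fun i => MeasurableSet.iInter fun j => (hmeas _) (hQmeas j)
  have hElmeas : ∀ i, MeasurableSet (El i) := fun i => (hBmeas i).inter ((hmeas _) (hDlm i))
  have hErmeas : ∀ i, MeasurableSet (Er i) := fun i => (hBmeas i).inter ((hmeas _) (hDrm i))
  have hEmeas : ∀ i, MeasurableSet (E i) := by
    intro i
    by_cases h : 2*i+1 ≤ n <;> simp only [hE, h, if_true, if_false]
    · exact (hElmeas i).union (hErmeas i)
    · exact MeasurableSet.empty
  -- points in El/Er violate Qs at i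
  have hElnotQ : ∀ i ω, ω ∈ El i → x (2*i+1) ω ∉ Qs i := by
    intro i ω hω hQ
    have h1 := ((hQmem i _).1 hQ).1
    have h2 : x (2*i+1) ω < α (2*i) := hω.2
    linarith
  have hErfacts : ∀ i ω, ω ∈ Er i →
      2*i+2 ≤ n ∧ α (2*i) ≤ x (2*i+1) ω ∧ α (2*i+2) < x (2*i+1) ω := by
    intro i ω hω
    have h2 := hω.2
    simp only [hDr] at h2
    by_cases h : 2*i+2 ≤ n
    · rw [if_pos h] at h2; exact ⟨h, h2.1, h2.2⟩
    · rw [if_neg h] at h2; exact absurd h2 (Set.notMem_empty _)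
  have hErnotQ : ∀ i ω, ω ∈ Er i → x (2*i+1) ω ∉ Qs i := by
    intro i ω hω hQ
    obtain ⟨h1, h2, h3⟩ := hErfacts i ω hω
    have := ((hQmem i _).1 hQ).2 h1
    linarith
  have hEnotQ : ∀ i ω, ω ∈ E i → 2*i+1 ≤ n ∧ x (2*i+1) ω ∉ Qs i := by
    intro i ω hω
    simp only [hE] at hω
    by_cases h : 2*i+1 ≤ n
    · rw [if_pos h] at hω
      rcases hω with hω | hω
      · exact ⟨h, hElnotQ i ω hω⟩
      · exact ⟨h, hErnotQ i ω hω⟩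
    · rw [if_neg h] at hω; exact absurd hω (Set.notMem_empty _)
  -- union decomposition
  have hUnion : Gᶜ = ⋃ i, E i := by
    ext ω
    simp only [Set.mem_compl_iff, hG, Set.mem_setOf_eq, Set.mem_iUnion]
    constructor
    · intro h
      push_neg at h
      obtain ⟨i, hi, hQi⟩ := h
      have hex : ∃ i, 2*i+1 ≤ n ∧ x (2*i+1) ω ∉ Qs i := ⟨i, hi, hQi⟩
      set i0 := Nat.find hex with hi0
      obtain ⟨hle, hnot⟩ : 2*i0+1 ≤ n ∧ x (2*i0+1) ω ∉ Qs i0 := Nat.find_spec hex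
      refine ⟨i0, ?_⟩
      have hpre : ω ∈ B i0 := by
        refine Set.mem_iInter.2 fun j => ?_
        by_contra hc
        exact Nat.find_min hex j.2 ⟨by omega, hc⟩
      simp only [hE, if_pos hle]
      rcases lt_or_ge (x (2*i0+1) ω) (α (2*i0)) with hlt | hge
      · exact Or.inl ⟨hpre, hlt⟩
      · right
        refine ⟨hpre, ?_⟩
        rw [hQmem] at hnot
        push_neg at hnot
        obtain ⟨h2, h3⟩ := hnot hge
        simp only [hDr, if_pos h2]
        exact ⟨hge, h3⟩
    · rintro ⟨i, hω⟩ hG'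
      obtain ⟨h1, h2⟩ := hEnotQ i ω hω
      exact h2 (hG' i h1)
  -- pairwise disjoint
  have hdisjE : Pairwise (Function.onFun Disjoint E) := by
    have key : ∀ i i', i < i' → ∀ ω, ω ∈ E i → ω ∉ E i' := by
      intro i i' hlt ω hω hω'
      have h1 := (hEnotQ i ω hω).2
      have hB' : ω ∈ B i' := by
        simp only [hE] at hω'
        by_cases h : 2*i'+1 ≤ n
        · rw [if_pos h] at hω'
          rcases hω' with h' | h' <;> exact h'.1
        · rw [if_neg h] at hω'; exact absurd hω' (Set.notMem_empty _)
      exact h1 (Set.mem_iInter.1 hB' ⟨i, hlt⟩)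
    intro i i' hne
    rcases lt_or_gt_of_ne hne with h | h
    · exact Set.disjoint_left.2 fun ω hω hω' => key i i' h ω hω hω'
    · exact Set.disjoint_right.2 fun ω hω hω' => key i' i h ω hω hω'
  have hsumE : μ Gᶜ = ∑' i, μ (E i) := by
    rw [hUnion]; exact measure_iUnion hdisjE hEmeas
  -- half bounds
  have hhalf_lt : ∀ k, 1 ≤ k → k ≤ n → μ ((x k) ⁻¹' Set.Iio (α k)) ≤ 1/2 := by
    intro k hk1 hkn
    have hco : (x k) ⁻¹' Set.Iio (α k) = {ω | α k ≤ x k ω}ᶜ := by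
      ext ω; simp [not_le]
    have hms : MeasurableSet {ω | α k ≤ x k ω} := by
      have : {ω | α k ≤ x k ω} = (x k) ⁻¹' Set.Ici (α k) := rfl
      rw [this]; exact (hmeas k) measurableSet_Ici
    rw [hco, prob_compl_eq_one_sub hms]
    rw [tsub_le_iff_right]
    calc (1:ℝ≥0∞) = 1/2 + 1/2 := (ENNReal.add_halves 1).symm
    _ ≤ 1/2 + μ {ω | α k ≤ x k ω} := add_le_add_right (hmed k hk1 hkn).1 _
  have hhalf_gt : ∀ k, 1 ≤ k → k ≤ n → μ ((x k) ⁻¹' Set.Ioi (α k)) ≤ 1/2 := by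
    intro k hk1 hkn
    have hco : (x k) ⁻¹' Set.Ioi (α k) = {ω | x k ω ≤ α k}ᶜ := by
      ext ω; simp [not_le]
    have hms : MeasurableSet {ω | x k ω ≤ α k} := by
      have : {ω | x k ω ≤ α k} = (x k) ⁻¹' Set.Iic (α k) := rfl
      rw [this]; exact (hmeas k) measurableSet_Iic
    rw [hco, prob_compl_eq_one_sub hms]
    rw [tsub_le_iff_right]
    calc (1:ℝ≥0∞) = 1/2 + 1/2 := (ENNReal.add_halves 1).symm
    _ ≤ 1/2 + μ {ω | x k ω ≤ α k} := add_le_add_right (hmed k hk1 hkn).2 _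
  -- the two conditional claims
  have claimL : ∀ i, 2*i+1 ≤ n → μ (El i ∩ M) ≤ μ (El i) * (1/2) := by
    intro i hi
    rcases Nat.eq_zero_or_pos i with rfl | hpos
    · have : El 0 ∩ M = ∅ := by
        ext ω
        simp only [Set.mem_inter_iff, Set.mem_empty_iff_false, iff_false, not_and]
        intro hωl hωM
        have h1 : x 1 ω < α 0 := by
          have := hωl.2
          simpa [hDl] using this
        have h2 : 0 ≤ x 1 ω := hωM.1
        rw [hα0] at h1; linarith
      rw [this]; simp
    · have hsub : El i ∩ M ⊆ El i ∩ (x (2*i)) ⁻¹' Set.Iio (α (2*i)) := by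
        rintro ω ⟨hωl, hωM⟩
        refine ⟨hωl, ?_⟩
        have hmono : x (2*i) ω ≤ x (2*i+1) ω := hωM.2 (2*i) (by omega) (by omega)
        have hlt : x (2*i+1) ω < α (2*i) := hωl.2
        simp only [Set.mem_preimage, Set.mem_Iio]
        linarith
      calc μ (El i ∩ M) ≤ μ (El i ∩ (x (2*i)) ⁻¹' Set.Iio (α (2*i))) := measure_mono hsub
      _ = μ (El i) * μ ((x (2*i)) ⁻¹' Set.Iio (α (2*i))) := by
          simp only [hEl, hB]
          exact aux_indep7 μ x hmeas hindep i (2*i) (fun j => by omega) Qs hQmeas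
            (Dl i) (hDlm i) _ measurableSet_Iio
      _ ≤ μ (El i) * (1/2) := mul_le_mul_right (hhalf_lt (2*i) (by omega) (by omega)) _
  have claimR : ∀ i, 2*i+1 ≤ n → μ (Er i ∩ M) ≤ μ (Er i) * (1/2) := by
    intro i hi
    by_cases h2 : 2*i+2 ≤ n
    · have hsub : Er i ∩ M ⊆ Er i ∩ (x (2*i+2)) ⁻¹' Set.Ioi (α (2*i+2)) := by
        rintro ω ⟨hωr, hωM⟩
        refine ⟨hωr, ?_⟩
        obtain ⟨-, -, h3⟩ := hErfacts i ω hωr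
        have hmono : x (2*i+1) ω ≤ x (2*i+2) ω := by
          have h := hωM.2 (2*i+1) (by omega) (by omega)
          exact h
        simp only [Set.mem_preimage, Set.mem_Ioi]
        linarith
      calc μ (Er i ∩ M) ≤ μ (Er i ∩ (x (2*i+2)) ⁻¹' Set.Ioi (α (2*i+2))) := measure_mono hsub
      _ = μ (Er i) * μ ((x (2*i+2)) ⁻¹' Set.Ioi (α (2*i+2))) := by
          simp only [hEr, hB]
          exact aux_indep7 μ x hmeas hindep i (2*i+2) (fun j => by omega) Qs hQmeas
            (Dr i) (hDrm i) _ measurableSet_Ioi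
      _ ≤ μ (Er i) * (1/2) := mul_le_mul_right (hhalf_gt (2*i+2) (by omega) h2) _
    · have : Er i = ∅ := by
        simp only [hEr, hDr, if_neg h2]
        simp
      rw [this]; simp
  -- per index bound
  have perE : ∀ i, μ (E i ∩ M) ≤ μ (E i) * (1/2) := by
    intro i
    by_cases h : 2*i+1 ≤ n
    · simp only [hE, if_pos h]
      have hdlr : Disjoint (El i) (Er i) := by
        refine Set.disjoint_left.2 fun ω hωl hωr => ?_
        have h1 : x (2*i+1) ω < α (2*i) := hωl.2
        have h2 := (hErfacts i ω hωr).2.1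
        linarith
      have hcut : (El i ∪ Er i) ∩ M = (El i ∩ M) ∪ (Er i ∩ M) := Set.union_inter_distrib_right _ _ _
      calc μ ((El i ∪ Er i) ∩ M) ≤ μ (El i ∩ M) + μ (Er i ∩ M) := by
            rw [hcut]; exact measure_union_le _ _
      _ ≤ μ (El i) * (1/2) + μ (Er i) * (1/2) := add_le_add (claimL i h) (claimR i h)
      _ = (μ (El i) + μ (Er i)) * (1/2) := (add_mul _ _ _).symm
      _ = μ (El i ∪ Er i) * (1/2) := by rw [measure_union hdlr (hErmeas i)]
    · simp only [hE, if_neg h]; simp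
  -- main inequality
  have hGcM : μ (Gᶜ ∩ M) ≤ μ Gᶜ * (1/2) := by
    calc μ (Gᶜ ∩ M) ≤ ∑' i, μ (E i ∩ M) := by
          rw [hUnion, Set.iUnion_inter]
          exact measure_iUnion_le _
    _ ≤ ∑' i, μ (E i) * (1/2) := ENNReal.tsum_le_tsum perE
    _ = (∑' i, μ (E i)) * (1/2) := ENNReal.tsum_mul_right
    _ = μ Gᶜ * (1/2) := by rw [hsumE]
  have hMc : μ Mᶜ ≤ ε := by
    rw [prob_compl_eq_one_sub hMmeas]
    calc 1 - μ M ≤ 1 - (1 - ε) := tsub_le_tsub_left hmonot 1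
    _ = ε := ENNReal.sub_sub_cancel (by simp) hε
  have hGc : μ Gᶜ ≤ μ Gᶜ * (1/2) + ε := by
    calc μ Gᶜ ≤ μ (Gᶜ ∩ M) + μ Mᶜ := by
          have : Gᶜ ⊆ (Gᶜ ∩ M) ∪ Mᶜ := by
            intro ω hω
            by_cases hm : ω ∈ M
            · exact Or.inl ⟨hω, hm⟩
            · exact Or.inr hm
          exact le_trans (measure_mono this) (measure_union_le _ _)
    _ ≤ μ Gᶜ * (1/2) + ε := add_le_add hGcM hMc
  -- conclude μ Gᶜ ≤ 2 ε
  have hhalf : μ Gᶜ * (1/2) = μ Gᶜ / 2 := by rw [one_div, div_eq_mul_inv]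
  rw [hhalf] at hGc
  have hcancel : μ Gᶜ / 2 ≤ ε := by
    have h1 : μ Gᶜ / 2 + μ Gᶜ / 2 ≤ μ Gᶜ / 2 + ε := by
      calc μ Gᶜ / 2 + μ Gᶜ / 2 = μ Gᶜ := ENNReal.add_halves _
      _ ≤ μ Gᶜ / 2 + ε := hGc
    exact (ENNReal.add_le_add_iff_left
      (ENNReal.div_lt_top (measure_ne_top μ _) (by norm_num)).ne).1 h1
  have hGc2 : μ Gᶜ ≤ 2 * ε := by
    calc μ Gᶜ = μ Gᶜ / 2 + μ Gᶜ / 2 := (ENNReal.add_halves _).symm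
    _ ≤ ε + ε := add_le_add hcancel hcancel
    _ = 2 * ε := (two_mul ε).symm
  have hGeq : μ G = 1 - μ Gᶜ := by
    have h := prob_add_prob_compl (μ := μ) hGmeas
    rw [← h, ENNReal.add_sub_cancel_right (measure_ne_top μ _)]
  rw [ge_iff_le, hGeq]
  exact tsub_le_tsub_left hGc2 1
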